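/- Let p be a prime with p ≡ 3 (mod 4), let χ be the Legendre symbol mod p, and let S ⊆ ℤ/pℤ be a finite subset with f_S(x) = ∏_{a∈S}(x−a). If |S| is even then ∑_{a ∈ ℤ/pℤ} χ(f_S(a)) ≡ 3 (mod 4), and if |S| is odd then ∑_{a ∈ ℤ/pℤ} χ(f_S(a)) ≡ 0 (mod 4). -/

import Mathlib

open Finset


lemma sum_pm_mod4 {α : Type*} [DecidableEq α] (A : Finset α) (ε : α → ℤ)
    (h : ∀ a ∈ A, ε a = 1 ∨ ε a = -1) :
    ((∏ a ∈ A, ε a) = 1 ∨ (∏ a ∈ A, ε a) = -1) ∧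
      ((∑ a ∈ A, ε a : ℤ) : ZMod 4)
        = (A.card : ZMod 4) - 1 + ((∏ a ∈ A, ε a : ℤ) : ZMod 4) := by
  have h4 : (4 : ZMod 4) = 0 := by decide
  induction A using Finset.induction_on with
  | empty => simp
  | insert _ _ ha ih =>
    rename_i a A
    obtain ⟨hd, hs⟩ := ih (fun x hx => h x (Finset.mem_insert_of_mem hx))
    rw [Finset.sum_insert ha, Finset.prod_insert ha, Finset.card_insert_of_notMem ha]
    rcases h a (Finset.mem_insert_self a A) with h1 | h1 <;>
      rcases hd with h2 | h2 <;>
      rw [h1, h2] <;> rw [h2] at hs <;> push_cast at hs ⊢ <;>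
      refine ⟨by norm_num, ?_⟩ <;>
      first
        | linear_combination hs
        | linear_combination hs - h4
        | linear_combination hs + h4

lemma prod_erase_zero (K : Type*) [Field K] [Fintype K] [DecidableEq K] :
    ∏ x ∈ univ.erase (0 : K), x = -1 := by
  have h := FiniteField.prod_univ_units_id_eq_neg_one (K := K)
  have h2 : ∏ x : Kˣ, (x : K) = -1 := by
    have := congrArg (Units.coeHom K) h
    rw [map_prod] at this
    simpa using this
  rw [← h2]
  refine (Finset.prod_bij (fun (x : Kˣ) _ => (x : K)) ?_ ?_ ?_ ?_).symm
  · intro x _; exact mem_erase.mpr ⟨Units.ne_zero x, mem_univ _⟩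
  · intro x _ y _ hxy; exact Units.ext hxy
  · intro x hx
    exact ⟨Units.mk0 x (mem_erase.mp hx).1, mem_univ _, rfl⟩
  · intros; rfl

lemma prod_shift {K : Type*} [Field K] [Fintype K] [DecidableEq K] (b : K) :
    ∏ a ∈ univ.erase b, (a - b) = -1 := by
  rw [← prod_erase_zero K]
  refine Finset.prod_bij (fun a _ => a - b) ?_ ?_ ?_ ?_
  · intro a ha
    exact mem_erase.mpr ⟨sub_ne_zero.mpr (mem_erase.mp ha).1, mem_univ _⟩
  · intro x _ y _ h; exact sub_left_injective h
  · intro x hx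
    refine ⟨x + b, mem_erase.mpr ⟨?_, mem_univ _⟩, by ring⟩
    intro h
    exact (mem_erase.mp hx).1 (by linear_combination h)
  · intros; rfl

lemma compl_union_erase {K : Type*} [Fintype K] [DecidableEq K] {S : Finset K} {b : K}
    (hb : b ∈ S) : Sᶜ ∪ S.erase b = univ.erase b := by
  ext a
  simp only [mem_union, mem_compl, mem_erase, mem_univ, and_true]
  constructor
  · rintro (h | ⟨h, _⟩)
    · rintro rfl; exact h hb
    · exact h
  · intro h
    by_cases hS : a ∈ S
    · exact Or.inr ⟨h, hS⟩
    · exact Or.inl hS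

lemma PD_eq {K : Type*} [Field K] [Fintype K] [DecidableEq K] (S : Finset K) :
    (∏ a ∈ Sᶜ, ∏ b ∈ S, (a - b)) * (∏ b ∈ S, ∏ a ∈ S.erase b, (a - b))
      = (-1) ^ S.card := by
  rw [Finset.prod_comm, ← Finset.prod_mul_distrib]
  rw [← Finset.prod_const (-1 : K)]
  refine Finset.prod_congr rfl fun b hb => ?_
  rw [← Finset.prod_union (by
    simp [Finset.disjoint_left, mem_compl]
    intro a ha _ ; exact fun h => ha h), compl_union_erase hb, prod_shift b]

lemma chiD {F : Type*} [Field F] [Fintype F] [DecidableEq F]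
    (hχ : quadraticChar F (-1) = -1) (S : Finset F) :
    quadraticChar F (∏ b ∈ S, ∏ a ∈ S.erase b, (a - b))
      = (-1) ^ (S.card.choose 2) := by
  induction S using Finset.induction_on with
  | empty => simp
  | insert _ _ hc ih =>
    rename_i c S
    have hsplit : ∏ b ∈ insert c S, ∏ a ∈ (insert c S).erase b, (a - b)
        = ((-1) ^ S.card * (∏ b ∈ S, (c - b)) ^ 2)
            * ∏ b ∈ S, ∏ a ∈ S.erase b, (a - b) := by
      rw [Finset.prod_insert hc, Finset.erase_insert hc]
      have h1 : ∀ b ∈ S, ∏ a ∈ (insert c S).erase b, (a - b)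
          = (c - b) * ∏ a ∈ S.erase b, (a - b) := by
        intro b hb
        rw [Finset.erase_insert_of_ne (fun h => hc (by rw [h]; exact hb)),
          Finset.prod_insert (fun h => hc (Finset.mem_of_mem_erase h))]
      rw [Finset.prod_congr rfl h1, Finset.prod_mul_distrib]
      have h2 : ∏ a ∈ S, (a - c) = (-1) ^ S.card * ∏ b ∈ S, (c - b) := by
        rw [← Finset.prod_const (-1 : F), ← Finset.prod_mul_distrib]
        exact Finset.prod_congr rfl fun a _ => by ring
      rw [h2]; ring
    have hne : (∏ b ∈ S, (c - b)) ≠ 0 :=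
      Finset.prod_ne_zero_iff.mpr fun b hb =>
        sub_ne_zero.mpr (fun h => hc (by rw [h]; exact hb))
    rw [hsplit, map_mul, map_mul, map_pow, hχ, ih, quadraticChar_sq_one' hne, mul_one,
      Finset.card_insert_of_notMem hc, ← pow_add]
    congr 1
    rw [Nat.choose_succ_succ]
    simp [Nat.choose_one_right]

lemma parity_n (k : ℕ) :
    (Even (k + k.choose 2) ↔ (k % 4 = 0 ∨ k % 4 = 3)) := by
  have h2 : 2 * (k + k.choose 2) = k * (k + 1) := by
    rcases k with _ | m
    · simp
    · have he : 2 * ((m + 1) * m / 2) = (m + 1) * m :=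
        Nat.two_mul_div_two_of_even (by rw [mul_comm]; exact Nat.even_mul_succ_self m)
      rw [Nat.choose_two_right, Nat.add_sub_cancel, Nat.mul_add, he]
      ring
  have key : Even (k + k.choose 2) ↔ (k * (k + 1)) % 4 = 0 := by
    constructor
    · rintro ⟨m, hm⟩; omega
    · intro h
      rcases Nat.even_or_odd (k + k.choose 2) with he | ho
      · exact he
      · exfalso; obtain ⟨m, hm⟩ := ho; omega
  rw [key]
  obtain ⟨q, r, hr, hk⟩ : ∃ q r, r < 4 ∧ k = 4 * q + r :=
    ⟨k / 4, k % 4, Nat.mod_lt _ (by norm_num), by omega⟩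
  subst hk
  have hmod : (4 * q + r) * (4 * q + r + 1) % 4 = r * (r + 1) % 4 := by
    have h : (4 * q + r) * (4 * q + r + 1)
        = 4 * (q * (4 * q + r + 1) + q * r) + r * (r + 1) := by ring
    omega
  rw [hmod]
  interval_cases r <;> omega

theorem stmt6 (p : ℕ) [Fact p.Prime] (hp : p % 4 = 3) (S : Finset (ZMod p)) :
    (Even S.card → (∑ a : ZMod p, quadraticChar (ZMod p) (∏ b ∈ S, (a - b))) ≡ 3 [ZMOD 4]) ∧
    (Odd S.card → (∑ a : ZMod p, quadraticChar (ZMod p) (∏ b ∈ S, (a - b))) ≡ 0 [ZMOD 4]) := by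
  have hprime : p.Prime := Fact.out
  set χ := quadraticChar (ZMod p) with hχdef
  have hχ1 : χ (-1) = -1 := by
    apply quadraticChar_neg_one_iff_not_isSquare.mpr
    rw [ZMod.exists_sq_eq_neg_one_iff]
    simp [hp]
  -- restrict the sum to the complement of S
  have hzero : ∑ a ∈ S, χ (∏ b ∈ S, (a - b)) = 0 := by
    refine Finset.sum_eq_zero fun a ha => ?_
    rw [Finset.prod_eq_zero ha (sub_self a)]
    exact quadraticChar_zero
  have hsum : (∑ a : ZMod p, χ (∏ b ∈ S, (a - b)))
      = ∑ a ∈ Sᶜ, χ (∏ b ∈ S, (a - b)) := by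
    rw [← Finset.sum_add_sum_compl S, hzero, zero_add]
  have hnz : ∀ a ∈ Sᶜ, χ (∏ b ∈ S, (a - b)) = 1 ∨ χ (∏ b ∈ S, (a - b)) = -1 := by
    intro a ha
    refine quadraticChar_dichotomy ?_
    refine Finset.prod_ne_zero_iff.mpr fun b hb => sub_ne_zero.mpr ?_
    rintro rfl
    exact (Finset.mem_compl.mp ha) hb
  obtain ⟨hd, hs⟩ := sum_pm_mod4 Sᶜ _ hnz
  -- identify the product
  have hmapprod : ∏ a ∈ Sᶜ, χ (∏ b ∈ S, (a - b)) = χ (∏ a ∈ Sᶜ, ∏ b ∈ S, (a - b)) :=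
    (map_prod χ _ _).symm
  have hP : χ (∏ a ∈ Sᶜ, ∏ b ∈ S, (a - b))
      = (-1) ^ (S.card + S.card.choose 2) := by
    have h := congrArg χ (PD_eq S)
    rw [map_mul, map_pow, hχ1, chiD hχ1] at h
    have he : ((-1 : ℤ) ^ (S.card.choose 2)) * ((-1 : ℤ) ^ (S.card.choose 2)) = 1 := by
      rw [← pow_add]
      exact Even.neg_one_pow ⟨_, rfl⟩
    have h' := congrArg (· * (-1 : ℤ) ^ (S.card.choose 2)) h
    rw [mul_assoc, he, mul_one] at h'
    rw [h', pow_add]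
  rw [hmapprod, hP] at hs
  have hcard : (Sᶜ.card : ZMod 4) = (p : ZMod 4) - (S.card : ZMod 4) := by
    rw [Finset.card_compl, Nat.cast_sub (Finset.card_le_univ S), ZMod.card]
  have hp4 : ((p : ℕ) : ZMod 4) = 3 := by
    rw [← ZMod.natCast_mod, hp]; rfl
  rw [hsum]
  have hfin : ((∑ a ∈ Sᶜ, χ (∏ b ∈ S, (a - b)) : ℤ) : ZMod 4)
      = 3 - (S.card : ZMod 4) - 1 + (((-1 : ℤ) ^ (S.card + S.card.choose 2) : ℤ) : ZMod 4) := by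
    rw [hs, hcard, hp4]
  constructor
  · intro hk
    have hk4 : S.card % 4 = 0 ∨ S.card % 4 = 2 := by
      rw [Nat.even_iff] at hk; omega
    refine (ZMod.intCast_eq_intCast_iff _ _ 4).mp ?_
    rcases hk4 with h4 | h4
    · have hev : Even (S.card + S.card.choose 2) := (parity_n S.card).mpr (Or.inl h4)
      rw [hfin, hev.neg_one_pow, ← ZMod.natCast_mod S.card 4, h4]
      push_cast
      try decide
    · have hod : ¬ Even (S.card + S.card.choose 2) := by
        rw [parity_n S.card]; omega
      rw [Nat.not_even_iff_odd] at hod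
      rw [hfin, hod.neg_one_pow, ← ZMod.natCast_mod S.card 4, h4]
      push_cast
      try decide
  · intro hk
    have hk4 : S.card % 4 = 1 ∨ S.card % 4 = 3 := by
      rw [Nat.odd_iff] at hk; omega
    refine (ZMod.intCast_eq_intCast_iff _ _ 4).mp ?_
    rcases hk4 with h4 | h4
    · have hod : ¬ Even (S.card + S.card.choose 2) := by
        rw [parity_n S.card]; omega
      rw [Nat.not_even_iff_odd] at hod
      rw [hfin, hod.neg_one_pow, ← ZMod.natCast_mod S.card 4, h4]
      push_cast
      try decide
    · have hev : Even (S.card + S.card.choose 2) := (parity_n S.card).mpr (Or.inr h4)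
      rw [hfin, hev.neg_one_pow, ← ZMod.natCast_mod S.card 4, h4]
      push_cast
      try decide
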